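/- Let m ≥ 1 and k ≥ m+2 be integers, and let q, d, N be positive integers with 2^m dividing q and N ≤ q^d. Suppose (x_1, …, x_k) ∈ {0, …, N−1}^k is a k-term degree-m polynomial progression such that for every i ∈ {1, …, k}, every entry of base_{q,d}(x_i) is strictly less than q/2^m. Then (base_{q,d}(x_1), …, base_{q,d}(x_k)) is a k-term degree-m vector polynomial progression, and it satisfies base_{q,d}(x_1) = ⋯ = base_{q,d}(x_k) if and only if x_1 = ⋯ = x_k. -/

import Mathlib

/-- `(x 0, …, x (k-1))` is a `k`-term degree-`m` polynomial progression:
there is a real polynomial `p` of degree at most `m` with `x i = p (i+1)`. -/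
def IsPP (m : ℕ) {k : ℕ} (x : Fin k → ℝ) : Prop :=
  ∃ p : Polynomial ℝ, p.natDegree ≤ m ∧ ∀ i : Fin k, x i = p.eval (((i : ℕ) : ℝ) + 1)

/-- `(v 0, …, v (k-1))` in `ℤ^d` is a `k`-term degree-`m` vector polynomial progression:
each coordinate sequence is a `k`-term degree-`m` polynomial progression. -/
def IsVecPP (m : ℕ) {k d : ℕ} (v : Fin k → Fin d → ℤ) : Prop :=
  ∀ j : Fin d, IsPP m (fun i => ((v i j : ℤ) : ℝ))

/-- `baseDigits q d x` is the base-`q` representation of `x` with `d` digits: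
the `i`-th digit is `x / q^i % q`. -/
def baseDigits (q d : ℕ) (x : ℕ) : Fin d → ℕ := fun i => x / q ^ (i : ℕ) % q

open Finset Polynomial fwdDiff

lemma fwdDiff_poly_eval (m : ℕ) : ∀ p : ℝ[X], p.natDegree ≤ m →
    (fwdDiff (1:ℝ))^[m+1] (fun y => p.eval y) = fun _ => 0 := by
  induction m with
  | zero =>
    intro p hp
    have := Polynomial.eq_C_of_natDegree_le_zero hp
    rw [this]
    funext y
    simp [fwdDiff]
  | succ m ih =>
    intro p hp
    set q : ℝ[X] := taylor 1 p - p with hqdef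
    have heval : fwdDiff (1:ℝ) (fun y => p.eval y) = fun y => q.eval y := by
      funext y
      simp [fwdDiff, hqdef, taylor_apply, eval_comp, add_comm]
    have hq : q.natDegree ≤ m := by
      by_cases hq0 : q = 0
      · simp [hq0]
      by_cases hp0 : p.natDegree = 0
      · exfalso
        apply hq0
        rw [hqdef, Polynomial.eq_C_of_natDegree_le_zero hp0.le, taylor_C, sub_self]
      · have hpne : p ≠ 0 := fun h => hp0 (by simp [h])
        have htne : taylor (1:ℝ) p ≠ 0 := fun h => hpne (by
          simpa using taylor_injective (1:ℝ) (h.trans (map_zero _).symm))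
        have hlc : (taylor (1:ℝ) p).leadingCoeff = p.leadingCoeff := by
          rw [taylor_apply,
            leadingCoeff_comp (by rw [natDegree_X_add_C]; norm_num : (X + C (1:ℝ)).natDegree ≠ 0),
            leadingCoeff_X_add_C, one_pow, mul_one]
        have hdeg : (taylor (1:ℝ) p).degree = p.degree := by
          rw [degree_eq_natDegree htne, degree_eq_natDegree hpne, natDegree_taylor]
        have hlt : q.degree < p.degree := by
          simpa [hdeg] using degree_sub_lt hdeg htne hlc
        have : q.natDegree < p.natDegree := natDegree_lt_natDegree hq0 hlt
        omega
    rw [Function.iterate_succ_apply, heval]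
    exact ih q hq

lemma poly_rec (m : ℕ) (p : ℝ[X]) (hp : p.natDegree ≤ m) (y : ℝ) :
    ∑ t ∈ range (m+2), ((-1:ℤ)^(m+1-t) * ((m+1).choose t) : ℤ) * p.eval (y + t) = 0 := by
  have h := fwdDiff_iter_eq_sum_shift (1:ℝ) (fun z => p.eval z) (m+1) y
  rw [fwdDiff_poly_eval m p hp] at h
  simp only [zsmul_eq_mul, nsmul_eq_mul, mul_one, smul_eq_mul] at h
  rw [show m+1+1 = m+2 by omega] at h
  exact h.symm

lemma rec_to_poly (m k : ℕ) (hk : m + 2 ≤ k) (g : ℕ → ℝ)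
    (hrec : ∀ i, i + m + 1 < k →
      ∑ t ∈ range (m+2), ((-1:ℤ)^(m+1-t) * ((m+1).choose t) : ℤ) * g (i+t) = 0) :
    ∃ p : ℝ[X], p.natDegree ≤ m ∧ ∀ n < k, g n = p.eval ((n:ℝ)+1) := by
  have hvs : Set.InjOn (fun n : ℕ => (n:ℝ)+1) ↑(range (m+1)) := by
    intro a _ b _ h
    have : (a:ℝ) = b := by dsimp at h; linarith
    exact_mod_cast this
  set p := Lagrange.interpolate (range (m+1)) (fun n : ℕ => (n:ℝ)+1) g with hpdef
  have hdeg : p.natDegree ≤ m := by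
    by_cases hp0 : p = 0
    · simp [hp0]
    · have h1 := Lagrange.degree_interpolate_lt (r := g) hvs
      rw [Finset.card_range, ← hpdef] at h1
      have h2 := (Polynomial.natDegree_lt_iff_degree_lt hp0).2 h1
      omega
  refine ⟨p, hdeg, ?_⟩
  intro n
  induction n using Nat.strong_induction_on with
  | _ n IH =>
    intro hn
    by_cases hnm : n < m + 1
    · exact (Lagrange.eval_interpolate_at_node g hvs (Finset.mem_range.2 hnm)).symm
    · set i := n - (m+1) with hidef
      have hi : i + m + 1 = n := by omega
      have h1 := hrec i (by omega)
      have h2 := poly_rec m p hdeg ((i:ℝ)+1)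
      rw [Finset.sum_range_succ] at h1 h2
      have key : ∀ t ∈ range (m+1),
          ((-1:ℤ)^(m+1-t) * ((m+1).choose t) : ℤ) * g (i+t)
          = ((-1:ℤ)^(m+1-t) * ((m+1).choose t) : ℤ) * p.eval ((i:ℝ)+1+t) := by
        intro t ht
        have ht' := Finset.mem_range.1 ht
        have := IH (i+t) (by omega) (by omega)
        rw [this]
        congr 1
        push_cast
        ring_nf
      rw [Finset.sum_congr rfl key] at h1
      have hc : ((-1:ℤ)^(m+1-(m+1)) * ((m+1).choose (m+1)) : ℤ) = 1 := by
        simp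
      rw [hc] at h1 h2
      have : (((m+1:ℕ)):ℝ) = (m:ℝ)+1 := by push_cast; ring
      have hgn : g (i + (m+1)) = p.eval ((i:ℝ)+1+((m+1:ℕ):ℝ)) := by
        push_cast at h1 h2 ⊢
        nlinarith [h1, h2]
      have hn' : i + (m+1) = n := by omega
      rw [hn'] at hgn
      rw [hgn]
      congr 1
      have : (n:ℝ) = (i:ℝ) + (m+1) := by exact_mod_cast congrArg (Nat.cast : ℕ → ℝ) hn'.symm
      push_cast
      rw [this]
      ring


lemma digit_expansion (q : ℕ) (hq : 0 < q) : ∀ (d : ℕ) (x : ℕ), x < q^d →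
    ∑ j ∈ range d, (x / q^j % q) * q^j = x := by
  intro d
  induction d with
  | zero =>
    intro x hx
    rw [pow_zero] at hx
    simp only [range_zero, sum_empty]
    omega
  | succ d ih =>
    intro x hx
    rw [Finset.sum_range_succ']
    simp only [pow_zero, Nat.pow_zero, mul_one, Nat.div_one]
    have h1 : ∀ j, x / q^(j+1) = (x / q) / q^j := by
      intro j
      rw [pow_succ', Nat.div_div_eq_div_mul]
    have h2 : ∑ j ∈ range d, (x / q^(j+1) % q) * q^(j+1)
        = q * ∑ j ∈ range d, ((x/q) / q^j % q) * q^j := by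
      rw [Finset.mul_sum]
      refine Finset.sum_congr rfl fun j _ => ?_
      rw [h1 j, pow_succ]
      ring
    rw [h2, ih (x/q) (Nat.div_lt_of_lt_mul (by rwa [← pow_succ']))]
    exact Nat.div_add_mod x q

lemma digits_all_zero (q : ℕ) (hq : 0 < q) : ∀ (d : ℕ) (D : ℕ → ℤ),
    (∀ j < d, |D j| < q) → (∑ j ∈ range d, D j * (q:ℤ)^j = 0) → ∀ j < d, D j = 0 := by
  intro d
  induction d with
  | zero => intro D _ _ j hj; omega
  | succ d ih =>
    intro D hbd hsum j hj
    rw [Finset.sum_range_succ'] at hsum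
    simp only [pow_zero, mul_one] at hsum
    have h2 : ∑ j ∈ range d, D (j+1) * (q:ℤ)^(j+1)
        = q * ∑ j ∈ range d, D (j+1) * (q:ℤ)^j := by
      rw [Finset.mul_sum]
      refine Finset.sum_congr rfl fun j _ => ?_
      rw [pow_succ]
      ring
    rw [h2] at hsum
    have hD0 : D 0 = 0 := by
      have h3 : |D 0| < (q:ℤ) := hbd 0 (by omega)
      have h4 : D 0 = -(q * ∑ j ∈ range d, D (j+1) * (q:ℤ)^j) := by linarith
      rcases eq_or_ne (∑ j ∈ range d, D (j+1) * (q:ℤ)^j) 0 with h5 | h5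
      · rw [h4, h5]; ring
      · exfalso
        have : (q:ℤ) ≤ |D 0| := by
          rw [h4, abs_neg, abs_mul, Nat.abs_cast]
          nlinarith [Int.one_le_abs h5, (by exact_mod_cast hq : (0:ℤ) < (q:ℤ))]
        omega
    rcases Nat.eq_zero_or_pos j with rfl | hjpos
    · exact hD0
    · obtain ⟨j', rfl⟩ : ∃ j', j = j' + 1 := ⟨j - 1, by omega⟩
      have hsum' : ∑ j ∈ range d, D (j+1) * (q:ℤ)^j = 0 := by
        have hq' : (q:ℤ) ≠ 0 := by exact_mod_cast hq.ne'
        have hmul : (q:ℤ) * (∑ j ∈ range d, D (j+1) * (q:ℤ)^j) = 0 := by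
          rw [hD0] at hsum; linarith
        rcases mul_eq_zero.1 hmul with h | h
        · exact absurd h hq'
        · exact h
      exact ih (fun t => D (t+1)) (fun t ht => hbd (t+1) (by omega)) hsum' j' (by omega)

lemma choose_alt_sum (m : ℕ) :
    ∑ t ∈ range (m+2), ((-1:ℤ)^(m+1-t) * ((m+1).choose t)) = 0 := by
  have h := Finset.sum_range_reflect (fun t => ((-1:ℤ)^(m+1-t) * ((m+1).choose t))) (m+2)
  rw [← h]
  have : ∀ t ∈ range (m+2), ((-1:ℤ)^(m+1-(m+2-1-t)) * ((m+1).choose (m+2-1-t)))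
      = (-1:ℤ)^t * ((m+1).choose t) := by
    intro t ht
    have ht' := Finset.mem_range.1 ht
    have e1 : m+2-1-t = m+1-t := by omega
    have e2 : m+1-(m+1-t) = t := by omega
    rw [e1, e2, Nat.choose_symm (by omega)]
  rw [Finset.sum_congr rfl this]
  exact Int.alternating_sum_range_choose_of_ne (by omega)

lemma rec_bound (m : ℕ) (B : ℤ) (hB : 1 ≤ B) (dig : ℕ → ℤ)
    (hd : ∀ t < m+2, 0 ≤ dig t ∧ dig t < B) :
    |∑ t ∈ range (m+2), ((-1:ℤ)^(m+1-t) * ((m+1).choose t)) * dig t| ≤ 2^m * (B-1) := by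
  set a : ℕ → ℤ := fun t => if Even (m+1-t) then ((m+1).choose t : ℤ) else 0 with ha
  set b : ℕ → ℤ := fun t => if Even (m+1-t) then 0 else ((m+1).choose t : ℤ) with hb
  have hab : ∀ t, ((-1:ℤ)^(m+1-t) * ((m+1).choose t)) = a t - b t := by
    intro t
    by_cases h : Even (m+1-t)
    · simp [ha, hb, h, Even.neg_one_pow h]
    · simp [ha, hb, h, Odd.neg_one_pow (Nat.not_even_iff_odd.1 h)]
  have hsum_ab : ∑ t ∈ range (m+2), (a t + b t) = 2^(m+1) := by
    have : ∀ t, a t + b t = ((m+1).choose t : ℤ) := by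
      intro t; by_cases h : Even (m+1-t) <;> simp [ha, hb, h]
    rw [Finset.sum_congr rfl (fun t _ => this t)]
    exact_mod_cast congrArg (Nat.cast : ℕ → ℤ) (Nat.sum_range_choose (m+1))
  have hsum_sub : ∑ t ∈ range (m+2), (a t - b t) = 0 := by
    rw [← Finset.sum_congr rfl (fun t _ => (hab t))]
    exact choose_alt_sum m
  rw [Finset.sum_add_distrib] at hsum_ab
  rw [Finset.sum_sub_distrib] at hsum_sub
  have hsa : ∑ t ∈ range (m+2), a t = 2^m := by
    have : (2:ℤ)^(m+1) = 2^m * 2 := by rw [pow_succ]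
    linarith
  have hsb : ∑ t ∈ range (m+2), b t = 2^m := by
    have : (2:ℤ)^(m+1) = 2^m * 2 := by rw [pow_succ]
    linarith
  have hconv : ∑ t ∈ range (m+2), ((-1:ℤ)^(m+1-t) * ((m+1).choose t)) * dig t
      = ∑ t ∈ range (m+2), a t * dig t - ∑ t ∈ range (m+2), b t * dig t := by
    rw [← Finset.sum_sub_distrib]
    refine Finset.sum_congr rfl fun t _ => ?_
    rw [hab t]; ring
  have hann : ∀ t, 0 ≤ a t := by
    intro t
    by_cases h : Even (m+1-t)
    · simp only [ha, if_pos h]; positivity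
    · simp [ha, if_neg h]
  have hbnn : ∀ t, 0 ≤ b t := by
    intro t
    by_cases h : Even (m+1-t)
    · simp [hb, if_pos h]
    · simp only [hb, if_neg h]; positivity
  have hA1 : 0 ≤ ∑ t ∈ range (m+2), a t * dig t :=
    Finset.sum_nonneg fun t ht => mul_nonneg (hann t) (hd t (Finset.mem_range.1 ht)).1
  have hA2 : ∑ t ∈ range (m+2), a t * dig t ≤ 2^m * (B-1) := by
    have step : ∑ t ∈ range (m+2), a t * dig t ≤ ∑ t ∈ range (m+2), a t * (B-1) :=
      Finset.sum_le_sum fun t ht => mul_le_mul_of_nonneg_left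
        (by linarith [(hd t (Finset.mem_range.1 ht)).2]) (hann t)
    calc ∑ t ∈ range (m+2), a t * dig t ≤ ∑ t ∈ range (m+2), a t * (B-1) := step
      _ = 2^m * (B-1) := by rw [← Finset.sum_mul, hsa]
  have hB1 : 0 ≤ ∑ t ∈ range (m+2), b t * dig t :=
    Finset.sum_nonneg fun t ht => mul_nonneg (hbnn t) (hd t (Finset.mem_range.1 ht)).1
  have hB2 : ∑ t ∈ range (m+2), b t * dig t ≤ 2^m * (B-1) := by
    have step : ∑ t ∈ range (m+2), b t * dig t ≤ ∑ t ∈ range (m+2), b t * (B-1) :=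
      Finset.sum_le_sum fun t ht => mul_le_mul_of_nonneg_left
        (by linarith [(hd t (Finset.mem_range.1 ht)).2]) (hbnn t)
    calc ∑ t ∈ range (m+2), b t * dig t ≤ ∑ t ∈ range (m+2), b t * (B-1) := step
      _ = 2^m * (B-1) := by rw [← Finset.sum_mul, hsb]
  rw [hconv, abs_le]
  constructor <;> linarith


/-- if `(x 0, …, x (k-1)) ∈ {0,…,N-1}^k` is a `k`-term degree-`m` polynomial
progression, `2^m ∣ q`, `N ≤ q^d`, and every base-`q` digit of every `x i` is less than
`q / 2^m`, then the base-`q` representations form a `k`-term degree-`m` vector polynomial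
progression, trivial iff the original progression is trivial. -/
theorem stmt3 (m k q d N : ℕ) (hm : 1 ≤ m) (hk : m + 2 ≤ k)
    (hq : 0 < q) (hd : 0 < d) (hN : 0 < N) (hdvd : 2 ^ m ∣ q) (hNq : N ≤ q ^ d)
    (x : Fin k → ℕ) (hx : ∀ i, x i < N)
    (hpp : IsPP m (fun i => ((x i : ℕ) : ℝ)))
    (hsmall : ∀ i j, baseDigits q d (x i) j < q / 2 ^ m) :
    IsVecPP m (fun i j => ((baseDigits q d (x i) j : ℕ) : ℤ)) ∧
    ((∀ i i', baseDigits q d (x i) = baseDigits q d (x i')) ↔ ∀ i i', x i = x i') := by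
  classical
  have hx' : ∀ i : Fin k, x i < q ^ d := fun i => lt_of_lt_of_le (hx i) hNq
  have hexp : ∀ i : Fin k, ∑ j ∈ Finset.range d, (x i / q^j % q) * q^j = x i :=
    fun i => digit_expansion q hq d (x i) (hx' i)
  set X : ℕ → ℕ := fun n => if h : n < k then x ⟨n, h⟩ else 0 with hXdef
  have hXv : ∀ i : Fin k, X (i : ℕ) = x i := by
    intro i
    simp only [hXdef, dif_pos i.isLt, Fin.eta]
  have hpow : 0 < (2:ℕ)^m := Nat.pow_pos (by omega)
  have hBge : 1 ≤ q / 2^m := (Nat.one_le_div_iff hpow).2 (Nat.le_of_dvd hq hdvd)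
  have hqB : 2^m * (q / 2^m) = q := Nat.mul_div_cancel' hdvd
  obtain ⟨p₀, hp₀d, hp₀v⟩ := hpp
  -- integer recurrence for x
  have hZ : ∀ i, i + m + 1 < k →
      ∑ t ∈ Finset.range (m+2), ((-1:ℤ)^(m+1-t) * ((m+1).choose t)) * ((X (i+t) : ℕ) : ℤ) = 0 := by
    intro i hi
    have hre : ∑ t ∈ Finset.range (m+2),
        (((-1:ℤ)^(m+1-t) * ((m+1).choose t) : ℤ) : ℝ) * ((X (i+t) : ℕ) : ℝ) = 0 := by
      have h := poly_rec m p₀ hp₀d ((i:ℝ)+1)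
      rw [← h]
      refine Finset.sum_congr rfl fun t ht => ?_
      have ht' := Finset.mem_range.1 ht
      congr 1
      have hik : i + t < k := by omega
      have h1 : X (i+t) = x ⟨i+t, hik⟩ := hXv ⟨i+t, hik⟩
      have hv : ((x ⟨i+t, hik⟩ : ℕ) : ℝ)
          = p₀.eval ((((⟨i+t, hik⟩ : Fin k) : ℕ) : ℝ) + 1) := hp₀v ⟨i+t, hik⟩
      rw [h1, hv]
      congr 1
      push_cast
      ring
    exact_mod_cast hre
  -- digit-level integer recurrence
  have hdigrec : ∀ i, i + m + 1 < k → ∀ j' < d,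
      ∑ t ∈ Finset.range (m+2), ((-1:ℤ)^(m+1-t) * ((m+1).choose t)) * ((X (i+t) / q^j' % q : ℕ) : ℤ) = 0 := by
    intro i hi
    have hXexp : ∀ t < m+2, ((X (i+t) : ℕ) : ℤ)
        = ∑ j' ∈ Finset.range d, ((X (i+t) / q^j' % q : ℕ) : ℤ) * (q:ℤ)^j' := by
      intro t ht
      have hik : i + t < k := by omega
      have h1 : X (i+t) = x ⟨i+t, hik⟩ := hXv ⟨i+t, hik⟩
      rw [h1]
      exact_mod_cast (hexp ⟨i+t, hik⟩).symm
    have hswap : ∑ j' ∈ Finset.range d,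
        (∑ t ∈ Finset.range (m+2), ((-1:ℤ)^(m+1-t) * ((m+1).choose t)) * ((X (i+t) / q^j' % q : ℕ) : ℤ))
          * (q:ℤ)^j' = 0 := by
      have e : ∑ j' ∈ Finset.range d,
          (∑ t ∈ Finset.range (m+2), ((-1:ℤ)^(m+1-t) * ((m+1).choose t)) * ((X (i+t) / q^j' % q : ℕ) : ℤ))
            * (q:ℤ)^j'
          = ∑ t ∈ Finset.range (m+2), ((-1:ℤ)^(m+1-t) * ((m+1).choose t)) * ((X (i+t) : ℕ) : ℤ) := by
        calc ∑ j' ∈ Finset.range d,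
            (∑ t ∈ Finset.range (m+2), ((-1:ℤ)^(m+1-t) * ((m+1).choose t)) * ((X (i+t) / q^j' % q : ℕ) : ℤ))
              * (q:ℤ)^j'
            = ∑ j' ∈ Finset.range d, ∑ t ∈ Finset.range (m+2),
              ((-1:ℤ)^(m+1-t) * ((m+1).choose t)) * ((X (i+t) / q^j' % q : ℕ) : ℤ) * (q:ℤ)^j' := by
              refine Finset.sum_congr rfl fun j' _ => ?_
              rw [Finset.sum_mul]
          _ = ∑ t ∈ Finset.range (m+2), ∑ j' ∈ Finset.range d,
              ((-1:ℤ)^(m+1-t) * ((m+1).choose t)) * ((X (i+t) / q^j' % q : ℕ) : ℤ) * (q:ℤ)^j' :=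
              Finset.sum_comm
          _ = ∑ t ∈ Finset.range (m+2), ((-1:ℤ)^(m+1-t) * ((m+1).choose t)) * ((X (i+t) : ℕ) : ℤ) := by
              refine Finset.sum_congr rfl fun t ht => ?_
              rw [hXexp t (Finset.mem_range.1 ht), Finset.mul_sum]
              refine Finset.sum_congr rfl fun j' _ => ?_
              ring
      rw [e]
      exact hZ i hi
    have hbd : ∀ j' < d, |∑ t ∈ Finset.range (m+2),
        ((-1:ℤ)^(m+1-t) * ((m+1).choose t)) * ((X (i+t) / q^j' % q : ℕ) : ℤ)| < (q:ℤ) := by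
      intro j' hj'
      have hrb := rec_bound m ((q / 2^m : ℕ) : ℤ) (by exact_mod_cast hBge)
        (fun t => ((X (i+t) / q^j' % q : ℕ) : ℤ)) ?_
      · have hq2 : ((2:ℤ)^m) * ((q / 2^m : ℕ) : ℤ) = (q:ℤ) := by exact_mod_cast hqB
        have h2pos : (0:ℤ) < 2^m := by positivity
        calc |∑ t ∈ Finset.range (m+2),
            ((-1:ℤ)^(m+1-t) * ((m+1).choose t)) * ((X (i+t) / q^j' % q : ℕ) : ℤ)|
            ≤ 2^m * (((q / 2^m : ℕ) : ℤ) - 1) := hrb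
          _ < (q:ℤ) := by nlinarith
      · intro t ht
        constructor
        · show (0:ℤ) ≤ ((X (i+t) / q^j' % q : ℕ) : ℤ)
          positivity
        · show ((X (i+t) / q^j' % q : ℕ) : ℤ) < ((q / 2^m : ℕ) : ℤ)
          have hik : i + t < k := by omega
          have hsm := hsmall ⟨i+t, hik⟩ ⟨j', hj'⟩
          have h1 : X (i+t) = x ⟨i+t, hik⟩ := hXv ⟨i+t, hik⟩
          have : X (i+t) / q^j' % q < q / 2^m := by
            rw [h1]; exact hsm
          exact_mod_cast this
    intro j' hj'
    exact digits_all_zero q hq d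
      (fun j' => ∑ t ∈ Finset.range (m+2),
        ((-1:ℤ)^(m+1-t) * ((m+1).choose t)) * ((X (i+t) / q^j' % q : ℕ) : ℤ))
      hbd hswap j' hj'
  constructor
  · -- IsVecPP
    intro j
    obtain ⟨p, hpd, hpv⟩ := rec_to_poly m k hk
      (fun n => ((X n / q^(j:ℕ) % q : ℕ) : ℝ))
      (by
        intro i hi
        have h := hdigrec i hi (j:ℕ) j.isLt
        show ∑ t ∈ Finset.range (m+2), (((-1:ℤ)^(m+1-t) * ((m+1).choose t) : ℤ) : ℝ)
            * ((X (i+t) / q^(j:ℕ) % q : ℕ) : ℝ) = 0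
        have h' : ((∑ t ∈ Finset.range (m+2), ((-1:ℤ)^(m+1-t) * ((m+1).choose t))
            * ((X (i+t) / q^(j:ℕ) % q : ℕ) : ℤ) : ℤ) : ℝ) = 0 := by
          rw [h]; norm_num
        rw [Int.cast_sum] at h'
        simp only [Int.cast_mul, Int.cast_natCast, Int.cast_pow, Int.cast_neg,
          Int.cast_one] at h' ⊢
        exact h')
    refine ⟨p, hpd, ?_⟩
    intro i
    have h := hpv (i : ℕ) i.isLt
    have h1 : X (i : ℕ) = x i := hXv i
    have h2 : baseDigits q d (x i) j = x i / q^(j:ℕ) % q := rfl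
    rw [h1] at h
    push_cast
    rw [h2]
    exact h
  · constructor
    · intro h i i'
      have hd1 := h i i'
      have e1 := (hexp i).symm
      have e2 := (hexp i').symm
      rw [e1, e2]
      refine Finset.sum_congr rfl fun j' hj' => ?_
      have hj'd := Finset.mem_range.1 hj'
      have := congrFun hd1 ⟨j', hj'd⟩
      simp only [baseDigits] at this
      rw [this]
    · intro h i i'
      funext j'
      simp only [baseDigits, h i i']
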